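/- Suppose n ∈ ZG(e), i.e., k(n,e) ≡ 3 or 6 (mod 9) and p(n,e) ≡ 0 (mod 3). Then there is no group homomorphism φ : ℤ^n → G onto an abelian group G of order k(n,e) whose restriction to the Lee ball B^n(e) is a bijection; equivalently, no linear e-perfect Lee code exists in ℤ^n. -/

import Mathlib

/-- The cardinality of the `n`-dimensional Lee ball of radius `e`. -/
def leeK (n e : ℕ) : ℕ := ∑ i ∈ Finset.range (min n e + 1), 2 ^ i * n.choose i * e.choose i

/-- `p(n,e) = Σ_{i=0}^{e} 2 i² k(n−1, e−i)`. -/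
def leeP (n e : ℕ) : ℕ := ∑ i ∈ Finset.range (e + 1), 2 * i ^ 2 * leeK (n - 1) (e - i)

open Finset

/-- `leeK` with a uniform summation range. -/
def leeK' (n e : ℕ) : ℕ := ∑ i ∈ Finset.range (e + 1), 2 ^ i * n.choose i * e.choose i

def leeU (n e : ℕ) : ℕ := ∑ i ∈ Finset.range (e + 1), 2 ^ i * n.choose (i + 1) * e.choose i

lemma leeK_eq_leeK' (n e : ℕ) : leeK n e = leeK' n e := by
  unfold leeK leeK'
  apply Finset.sum_subset
  · exact Finset.range_subset_range.2 (by omega)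
  · intro i hi hni
    simp only [Finset.mem_range] at hi hni
    have hn : n < i := by omega
    simp [Nat.choose_eq_zero_of_lt hn]

lemma leeK'_succ_right (m f : ℕ) : leeK' m (f + 1) = leeK' m f + 2 * leeU m f := by
  unfold leeK' leeU
  rw [Finset.sum_range_succ']
  have h1 : ∀ i, 2 ^ (i+1) * m.choose (i+1) * (f+1).choose (i+1)
      = 2 ^ (i+1) * m.choose (i+1) * f.choose (i+1) + 2 * (2 ^ i * m.choose (i+1) * f.choose i) := by
    intro i; rw [Nat.choose_succ_succ]; ring
  simp only [h1]
  rw [Finset.sum_add_distrib, ← Finset.mul_sum]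
  have h2 : ∑ i ∈ Finset.range (f+1), 2 ^ (i+1) * m.choose (i+1) * f.choose (i+1)
      = ∑ i ∈ Finset.range f, 2 ^ (i+1) * m.choose (i+1) * f.choose (i+1) := by
    rw [Finset.sum_range_succ, Nat.choose_succ_self, Nat.mul_zero, Nat.add_zero]
  rw [h2]
  have h3 : ∑ i ∈ Finset.range (f+1), 2 ^ i * m.choose i * f.choose i
      = ∑ i ∈ Finset.range f, 2 ^ (i+1) * m.choose (i+1) * f.choose (i+1)
      + 2 ^ 0 * m.choose 0 * f.choose 0 := Finset.sum_range_succ' _ f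
  rw [h3]
  simp [Nat.choose_zero_right]
  ring

lemma leeU_succ (n e : ℕ) : leeU (n + 1) e = leeK' n e + leeU n e := by
  unfold leeU leeK'
  rw [← Finset.sum_add_distrib]
  refine Finset.sum_congr rfl fun i _ => ?_
  rw [Nat.choose_succ_succ]
  ring

lemma delannoy (n e : ℕ) :
    leeK' (n + 1) (e + 1) = leeK' (n + 1) e + leeK' n (e + 1) + leeK' n e := by
  rw [leeK'_succ_right, leeK'_succ_right, leeU_succ]
  ring

lemma leeK'_zero_right (n : ℕ) : leeK' n 0 = 1 := by
  simp [leeK']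

lemma leeK'_zero_left (e : ℕ) : leeK' 0 e = 1 := by
  unfold leeK'
  rw [Finset.sum_range_succ']
  simp

lemma leeK'_row (n e : ℕ) :
    leeK' (n + 1) e = leeK' n e + 2 * ∑ j ∈ Finset.range e, leeK' n (e - (j + 1)) := by
  induction e with
  | zero => simp [leeK'_zero_right]
  | succ e ih =>
      rw [delannoy, ih, Finset.sum_range_succ']
      simp only [Nat.succ_sub_succ_eq_sub, Nat.sub_zero]
      ring

/-- The Lee ball as a finset. -/
noncomputable def ballSet (n e : ℕ) : Finset (Fin n → ℤ) :=
  (Fintype.piFinset fun _ => Finset.Icc (-(e:ℤ)) (e:ℤ)).filter fun x => ∑ i, |x i| ≤ (e:ℤ)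

lemma mem_ballSet {n e : ℕ} {x : Fin n → ℤ} : x ∈ ballSet n e ↔ ∑ i, |x i| ≤ (e:ℤ) := by
  simp only [ballSet, Finset.mem_filter, Fintype.mem_piFinset, Finset.mem_Icc]
  constructor
  · exact fun h => h.2
  · intro h
    refine ⟨fun i => abs_le.mp (le_trans ?_ h), h⟩
    exact Finset.single_le_sum (fun j _ => abs_nonneg (x j)) (Finset.mem_univ i)

lemma slice_card (m e : ℕ) (v : ℤ) (hv : v.natAbs ≤ e) :
    ((ballSet (m+1) e).filter fun b => b 0 = v).card = (ballSet m (e - v.natAbs)).card := by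
  have hcast : ((e - v.natAbs : ℕ) : ℤ) = (e : ℤ) - |v| := by
    rw [Nat.cast_sub hv, Int.abs_eq_natAbs]
  refine Finset.card_bij' (fun b _ => Fin.tail b) (fun y _ => Fin.cons v y) ?_ ?_ ?_ ?_
  case refine_1 =>
    intro b hb
    obtain ⟨hb1, hb2⟩ := Finset.mem_filter.mp hb
    rw [mem_ballSet] at hb1 ⊢
    rw [hcast]
    have hs : ∑ i, |b i| = |b 0| + ∑ i : Fin m, |b i.succ| := Fin.sum_univ_succ _
    rw [hs, hb2] at hb1
    have hteq : ∑ i : Fin m, |Fin.tail b i| = ∑ i : Fin m, |b i.succ| := rfl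
    rw [hteq]
    linarith
  case refine_2 =>
    intro y hy
    rw [mem_ballSet] at hy
    rw [Finset.mem_filter]
    constructor
    · rw [mem_ballSet]
      have hs := Fin.sum_univ_succ (fun i => |Fin.cons (α := fun _ => ℤ) v y i|)
      rw [hs]
      have h2 : ∀ i : Fin m, Fin.cons (α := fun _ => ℤ) v y i.succ = y i := fun i => rfl
      have h0 : Fin.cons (α := fun _ => ℤ) v y 0 = v := rfl
      simp only [h2, h0]
      rw [hcast] at hy
      linarith
    · rfl
  case refine_3 =>
    intro b hb
    have h2 := (Finset.mem_filter.mp hb).2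
    show Fin.cons v (Fin.tail b) = b
    rw [← h2]
    exact Fin.cons_self_tail b
  case refine_4 =>
    intro y _
    exact Fin.tail_cons (α := fun _ => ℤ) v y

lemma ballSet_zero_mem (e : ℕ) (x : Fin 0 → ℤ) : x ∈ ballSet 0 e := by
  rw [mem_ballSet]
  simp

lemma card_ballSet_zero (e : ℕ) : (ballSet 0 e).card = 1 := by
  have : ballSet 0 e = {(fun i => 0 : Fin 0 → ℤ)} := by
    ext x
    simp only [Finset.mem_singleton]
    constructor
    · intro _; funext i; exact absurd i.2 (by omega)
    · intro h; exact ballSet_zero_mem e x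
  rw [this, Finset.card_singleton]

lemma ballSet_card_succ (m e : ℕ) :
    (ballSet (m+1) e).card
      = ∑ v ∈ Finset.Icc (-(e:ℤ)) (e:ℤ), (ballSet m (e - v.natAbs)).card := by
  rw [Finset.card_eq_sum_card_fiberwise (f := fun b => b 0)
      (t := Finset.Icc (-(e:ℤ)) (e:ℤ)) ?_]
  · refine Finset.sum_congr rfl fun v hv => ?_
    apply slice_card
    simp only [Finset.mem_Icc] at hv
    omega
  · intro b hb
    rw [Finset.mem_coe, mem_ballSet] at hb
    have h0 : |b 0| ≤ (e:ℤ) :=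
      le_trans (Finset.single_le_sum (fun j _ => abs_nonneg (b j)) (Finset.mem_univ 0)) hb
    simp only [Finset.mem_coe, Finset.mem_Icc]
    constructor <;> [linarith [neg_abs_le (b 0)]; linarith [le_abs_self (b 0)]]

lemma sum_Icc_natAbs {M : Type*} [AddCommMonoid M] (e : ℕ) (g : ℕ → M) :
    ∑ v ∈ Finset.Icc (-(e:ℤ)) (e:ℤ), g v.natAbs
      = g 0 + (∑ j ∈ Finset.range e, g (j+1)) + ∑ j ∈ Finset.range e, g (j+1) := by
  induction e with
  | zero => simp
  | succ e ih =>
      have hins : Finset.Icc (-((e:ℤ)+1)) ((e:ℤ)+1)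
          = insert (-((e:ℤ)+1)) (insert ((e:ℤ)+1) (Finset.Icc (-(e:ℤ)) (e:ℤ))) := by
        ext x
        simp only [Finset.mem_Icc, Finset.mem_insert]
        omega
      have h1 : (-((e:ℤ)+1)) ∉ insert ((e:ℤ)+1) (Finset.Icc (-(e:ℤ)) (e:ℤ)) := by
        simp only [Finset.mem_insert, Finset.mem_Icc]
        omega
      have h2 : ((e:ℤ)+1) ∉ Finset.Icc (-(e:ℤ)) (e:ℤ) := by
        simp only [Finset.mem_Icc]; omega
      have hc : ((e+1:ℕ):ℤ) = (e:ℤ)+1 := by push_cast; ring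
      rw [hc, hins, Finset.sum_insert h1, Finset.sum_insert h2, ih]
      simp only [Finset.sum_range_succ]
      have hn1 : ((-((e:ℤ)+1)).natAbs) = e + 1 := by omega
      have hn2 : (((e:ℤ)+1).natAbs) = e + 1 := by omega
      rw [hn1, hn2]
      abel

lemma card_ballSet (n e : ℕ) : (ballSet n e).card = leeK n e := by
  induction n generalizing e with
  | zero =>
      rw [card_ballSet_zero, leeK_eq_leeK', leeK'_zero_left]
  | succ m ih =>
      rw [ballSet_card_succ]
      have h1 : ∀ v ∈ Finset.Icc (-(e:ℤ)) (e:ℤ),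
          (ballSet m (e - v.natAbs)).card = leeK' m (e - v.natAbs) := by
        intro v _
        rw [ih, leeK_eq_leeK']
      rw [Finset.sum_congr rfl h1, sum_Icc_natAbs e (fun j => leeK' m (e - j)),
        leeK_eq_leeK', leeK'_row, Nat.sub_zero]
      ring

lemma update_mem_ballSet {n e : ℕ} {b : Fin n → ℤ} (hb : b ∈ ballSet n e) (i : Fin n) :
    Function.update b i (-(b i)) ∈ ballSet n e := by
  rw [mem_ballSet] at hb ⊢
  have : ∀ k, |Function.update b i (-(b i)) k| = |b k| := by
    intro k
    by_cases hk : k = i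
    · subst hk; rw [Function.update_self, abs_neg]
    · rw [Function.update_of_ne hk]
  calc ∑ k, |Function.update b i (-(b i)) k| = ∑ k, |b k| :=
        Finset.sum_congr rfl fun k _ => this k
    _ ≤ (e:ℤ) := hb

lemma cross_zero {n e : ℕ} {i j : Fin n} (hij : i ≠ j) :
    ∑ b ∈ ballSet n e, b i * b j = 0 := by
  apply Finset.sum_involution (fun b _ => Function.update b i (-(b i)))
  · intro b _
    rw [Function.update_of_ne (Ne.symm hij), Function.update_self]
    ring
  · intro b _ hbne heq
    apply hbne
    have := congrFun heq i
    rw [Function.update_self] at this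
    have hbi : b i = 0 := by omega
    rw [hbi, zero_mul]
  · intro b _
    funext k
    by_cases hk : k = i
    · subst hk; simp [Function.update_self]
    · rw [Function.update_of_ne hk, Function.update_of_ne hk]
  · intro b hb
    exact update_mem_ballSet hb i

lemma sum_coord_sq (m e : ℕ) (i : Fin (m+1)) :
    ∑ b ∈ ballSet (m+1) e, (b i)^2 = ∑ b ∈ ballSet (m+1) e, (b 0)^2 := by
  have hmem : ∀ b ∈ ballSet (m+1) e, b ∘ Equiv.swap 0 i ∈ ballSet (m+1) e := by
    intro b hb
    rw [mem_ballSet] at hb ⊢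
    calc ∑ k, |b (Equiv.swap 0 i k)| = ∑ k, |b k| := Equiv.sum_comp (Equiv.swap 0 i) (fun k => |b k|)
      _ ≤ (e:ℤ) := hb
  refine Finset.sum_nbij' (fun b => b ∘ Equiv.swap 0 i) (fun b => b ∘ Equiv.swap 0 i)
    ?_ ?_ ?_ ?_ ?_
  · exact hmem
  · exact hmem
  · intro b _
    funext k
    simp [Function.comp, Equiv.swap_apply_self]
  · intro b _
    funext k
    simp [Function.comp, Equiv.swap_apply_self]
  · intro b _
    simp [Function.comp, Equiv.swap_apply_left]

lemma diag_sum (m e : ℕ) (i : Fin (m+1)) :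
    ∑ b ∈ ballSet (m+1) e, (b i)^2 = (leeP (m+1) e : ℤ) := by
  rw [sum_coord_sq]
  have hmaps : ∀ b ∈ ballSet (m+1) e, b 0 ∈ Finset.Icc (-(e:ℤ)) (e:ℤ) := by
    intro b hb
    rw [mem_ballSet] at hb
    have h0 : |b 0| ≤ (e:ℤ) :=
      le_trans (Finset.single_le_sum (fun j _ => abs_nonneg (b j)) (Finset.mem_univ 0)) hb
    simp only [Finset.mem_Icc]
    constructor <;> [linarith [neg_abs_le (b 0)]; linarith [le_abs_self (b 0)]]
  rw [← Finset.sum_fiberwise_of_maps_to hmaps (fun b => (b 0)^2)]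
  have hinner : ∀ v ∈ Finset.Icc (-(e:ℤ)) (e:ℤ),
      ∑ b ∈ (ballSet (m+1) e).filter (fun b => b 0 = v), (b 0)^2
        = ((v.natAbs^2 * leeK m (e - v.natAbs) : ℕ) : ℤ) := by
    intro v hv
    simp only [Finset.mem_Icc] at hv
    have hvle : v.natAbs ≤ e := by omega
    have h1 : ∑ b ∈ (ballSet (m+1) e).filter (fun b => b 0 = v), (b 0)^2
        = ∑ b ∈ (ballSet (m+1) e).filter (fun b => b 0 = v), v^2 := by
      refine Finset.sum_congr rfl fun b hb => ?_
      rw [(Finset.mem_filter.mp hb).2]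
    rw [h1, Finset.sum_const, slice_card m e v hvle, card_ballSet, nsmul_eq_mul]
    push_cast
    rw [sq_abs]
    ring
  rw [Finset.sum_congr rfl hinner, sum_Icc_natAbs e (fun j => ((j^2 * leeK m (e - j) : ℕ) : ℤ))]
  have hP : leeP (m+1) e = ∑ j ∈ Finset.range e, 2 * (j+1)^2 * leeK m (e - (j+1)) := by
    unfold leeP
    simp only [Nat.add_sub_cancel]
    rw [Finset.sum_range_succ']
    simp
  rw [hP]
  push_cast
  rw [zero_mul, zero_add, ← Finset.sum_add_distrib]
  exact Finset.sum_congr rfl fun j _ => by ring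

lemma quad (m e : ℕ) (a : Fin (m+1) → ℤ) :
    ∑ b ∈ ballSet (m+1) e, (∑ i, b i * a i)^2 = (leeP (m+1) e : ℤ) * ∑ i, (a i)^2 := by
  have expand : ∀ b : Fin (m+1) → ℤ,
      (∑ i, b i * a i)^2 = ∑ i, ∑ j, (a i * a j) * (b i * b j) := by
    intro b
    rw [sq, Finset.sum_mul_sum]
    exact Finset.sum_congr rfl fun i _ => Finset.sum_congr rfl fun j _ => by ring
  rw [Finset.sum_congr rfl fun b _ => expand b]
  rw [Finset.sum_comm]
  have hswap : ∀ i : Fin (m+1),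
      ∑ b ∈ ballSet (m+1) e, ∑ j, (a i * a j) * (b i * b j)
        = (a i)^2 * (leeP (m+1) e : ℤ) := by
    intro i
    rw [Finset.sum_comm]
    have hj : ∀ j : Fin (m+1),
        ∑ b ∈ ballSet (m+1) e, (a i * a j) * (b i * b j)
          = if j = i then (a i)^2 * (leeP (m+1) e : ℤ) else 0 := by
      intro j
      rw [← Finset.mul_sum]
      by_cases hji : j = i
      · subst hji
        have : ∑ b ∈ ballSet (m+1) e, b j * b j = (leeP (m+1) e : ℤ) := by
          rw [← diag_sum m e j]
          exact Finset.sum_congr rfl fun b _ => (sq (b j)).symm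
        rw [this, if_pos rfl]
        ring
      · rw [cross_zero (fun h => hji h.symm), if_neg hji, mul_zero]
    rw [Finset.sum_congr rfl fun j _ => hj j, Finset.sum_ite_eq' Finset.univ i
      (fun _ => (a i)^2 * (leeP (m+1) e : ℤ))]
    simp
  rw [Finset.sum_congr rfl fun i _ => hswap i, ← Finset.sum_mul]
  ring

lemma sq_zmod3 : ∀ c : ZMod 3, c ≠ 0 → c^2 = 1 := by decide

theorem no_linear_perfect_lee_code_of_ZhangGe (n e : ℕ) (hn : 0 < n) (he : 0 < e)
    (hk : leeK n e % 9 = 3 ∨ leeK n e % 9 = 6) (hp : leeP n e % 3 = 0) :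
    ∀ (G : Type) [AddCommGroup G], Nat.card G = leeK n e →
      ∀ φ : (Fin n → ℤ) →+ G,
        ¬ Set.BijOn φ {x : Fin n → ℤ | ∑ i, |x i| ≤ (e : ℤ)} Set.univ := by
  intro G _ hG φ h
  obtain ⟨m, rfl⟩ : ∃ m, n = m + 1 := ⟨n - 1, by omega⟩
  have hk3 : 3 ∣ leeK (m+1) e := by omega
  have hkpos : 0 < leeK (m+1) e := by omega
  haveI : Finite G := Nat.finite_of_card_ne_zero (by omega)
  haveI : Fact (Nat.Prime 3) := ⟨by norm_num⟩
  -- an element of additive order 3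
  obtain ⟨g, hg⟩ : ∃ g : G, addOrderOf g = 3 := by
    haveI : Fintype G := Fintype.ofFinite G
    have hd : 3 ∣ Fintype.card G := by
      rw [← Nat.card_eq_fintype_card, hG]; exact hk3
    exact exists_prime_addOrderOf_dvd_card 3 hd
  have hg3 : 3 • g = 0 := by
    rw [← hg]; exact addOrderOf_nsmul_eq_zero g
  have hgne : g ≠ 0 := by
    intro h0
    rw [h0, addOrderOf_zero] at hg
    omega
  -- the subgroup 3G
  let tri : G →+ G :=
    { toFun := fun x => 3 • x
      map_zero' := smul_zero 3
      map_add' := fun x y => smul_add 3 x y }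
  have htri_not_surj : ¬ Function.Surjective tri := by
    intro hs
    have hinj := Finite.injective_iff_surjective.mpr hs
    exact hgne (hinj (show tri g = tri 0 by simp [tri, hg3]))
  set H := tri.range with hH
  have h3H : ∀ x : G, 3 • x ∈ H := fun x => ⟨x, rfl⟩
  letI : Module (ZMod 3) (G ⧸ H) := QuotientAddGroup.zmodModule h3H
  haveI : Nontrivial (G ⧸ H) := by
    obtain ⟨y, hy⟩ := not_forall.mp fun hall => htri_not_surj fun y => hall y
    refine ⟨QuotientAddGroup.mk' H y, 0, fun hcon => ?_⟩
    rw [QuotientAddGroup.mk'_apply, QuotientAddGroup.eq_zero_iff] at hcon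
    obtain ⟨z, hz⟩ := hcon
    exact hy ⟨z, hz⟩
  -- a surjective character to ZMod 3
  let bQ := Module.Basis.ofVectorSpace (ZMod 3) (G ⧸ H)
  obtain ⟨i0⟩ := bQ.index_nonempty
  let ψ : G →+ ZMod 3 := ((bQ.coord i0).toAddMonoidHom).comp (QuotientAddGroup.mk' H)
  have hψsurj : Function.Surjective ψ := by
    intro c
    obtain ⟨x, hx⟩ := QuotientAddGroup.mk'_surjective H (c • bQ i0)
    refine ⟨x, ?_⟩
    show (bQ.coord i0) ((QuotientAddGroup.mk' H) x) = c
    rw [hx, map_smul, Module.Basis.coord_apply, Module.Basis.repr_self, Finsupp.single_eq_same, smul_eq_mul,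
      mul_one]
  -- kernel cardinality
  set t := Nat.card ψ.ker with ht
  have hker : t * 3 = leeK (m+1) e := by
    have h1 := AddSubgroup.card_mul_index ψ.ker
    have h2 : ψ.ker.index = 3 := by
      rw [AddSubgroup.index_ker, AddMonoidHom.range_eq_top.mpr hψsurj]
      rw [Nat.card_congr AddSubgroup.topEquiv.toEquiv, Nat.card_zmod]
    rw [h2] at h1
    rw [← hG]
    exact h1
  -- the character pulled back to ℤ^n
  let χ : (Fin (m+1) → ℤ) →+ ZMod 3 := ψ.comp φ
  have hχapp : ∀ x, χ x = ψ (φ x) := fun x => rfl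
  -- the number of ball elements mapping to 0
  have hfib : ((ballSet (m+1) e).filter fun x => χ x = 0).card = t := by
    have hsub : {x : Fin (m+1) → ℤ | x ∈ ballSet (m+1) e ∧ φ x ∈ ψ.ker}
        ⊆ {x : Fin (m+1) → ℤ | ∑ i, |x i| ≤ (e:ℤ)} := by
      intro x hx
      exact mem_ballSet.mp hx.1
    have hbij : Set.BijOn φ {x : Fin (m+1) → ℤ | x ∈ ballSet (m+1) e ∧ φ x ∈ ψ.ker}
        (ψ.ker : Set G) := by
      refine ⟨fun x hx => hx.2, h.injOn.mono hsub, ?_⟩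
      intro gk hgk
      obtain ⟨x, hxB, hfx⟩ := h.surjOn (Set.mem_univ gk)
      exact ⟨x, ⟨mem_ballSet.mpr hxB, by rw [hfx]; exact hgk⟩, hfx⟩
    have h1 := Nat.card_congr (Set.BijOn.equiv φ hbij)
    have hset : {x : Fin (m+1) → ℤ | x ∈ ballSet (m+1) e ∧ φ x ∈ ψ.ker}
        = ↑((ballSet (m+1) e).filter fun x => χ x = 0) := by
      ext x
      simp only [Finset.coe_filter, Set.mem_setOf_eq, AddMonoidHom.mem_ker]
      rfl
    rw [hset] at h1
    simp only [SetLike.coe_sort_coe] at h1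
    rw [Nat.card_eq_finsetCard] at h1
    exact h1
  -- the integer weights
  let a : Fin (m+1) → ℤ := fun i => ((χ (Pi.single i 1)).val : ℤ)
  have hcasta : ∀ i, ((a i : ℤ) : ZMod 3) = χ (Pi.single i 1) := by
    intro i
    show ((((χ (Pi.single i 1)).val : ℤ) : ZMod 3)) = χ (Pi.single i 1)
    push_cast
    exact ZMod.natCast_rightInverse (χ (Pi.single i 1))
  have hχ : ∀ x : Fin (m+1) → ℤ, (((∑ i, x i * a i : ℤ) : ZMod 3)) = χ x := by
    intro x
    have hxdec : χ x = ∑ i, ((x i : ℤ) : ZMod 3) * χ (Pi.single i 1) := by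
      nth_rewrite 1 [show x = ∑ i, Pi.single i (x i) from (Finset.univ_sum_single x).symm]
      rw [map_sum]
      refine Finset.sum_congr rfl fun i _ => ?_
      have hsingle : Pi.single i (x i) = x i • Pi.single (M := fun _ => ℤ) i 1 := by
        funext k
        by_cases hk : k = i
        · subst hk; simp
        · simp [Pi.single_eq_of_ne hk]
      rw [hsingle, map_zsmul, zsmul_eq_mul]
    rw [hxdec, Int.cast_sum]
    refine Finset.sum_congr rfl fun i _ => ?_
    rw [Int.cast_mul, hcasta i]
  -- the two computations of the quadratic sum mod 3
  have hq := quad m e a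
  have hmod0 : ((∑ b ∈ ballSet (m+1) e, (∑ i, b i * a i)^2 : ℤ) : ZMod 3) = 0 := by
    rw [hq]
    have h3p : ((leeP (m+1) e : ℤ) : ZMod 3) = 0 := by
      push_cast
      rw [ZMod.natCast_eq_zero_iff]
      exact Nat.dvd_of_mod_eq_zero hp
    rw [Int.cast_mul, h3p, zero_mul]
  have hmod1 : ((∑ b ∈ ballSet (m+1) e, (∑ i, b i * a i)^2 : ℤ) : ZMod 3)
      = ((2 * t : ℕ) : ZMod 3) := by
    rw [Int.cast_sum]
    have hterm : ∀ b ∈ ballSet (m+1) e, (((∑ i, b i * a i)^2 : ℤ) : ZMod 3) = (χ b)^2 := by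
      intro b _
      rw [Int.cast_pow, hχ b]
    rw [Finset.sum_congr rfl hterm]
    rw [← Finset.sum_filter_add_sum_filter_not (ballSet (m+1) e) (fun b => χ b = 0)]
    have hz : ∑ b ∈ (ballSet (m+1) e).filter (fun b => χ b = 0), (χ b)^2 = 0 := by
      apply Finset.sum_eq_zero
      intro b hb
      rw [(Finset.mem_filter.mp hb).2]
      ring
    have ho : ∑ b ∈ (ballSet (m+1) e).filter (fun b => ¬ χ b = 0), (χ b)^2
        = ((((ballSet (m+1) e).filter (fun b => ¬ χ b = 0)).card : ℕ) : ZMod 3) := by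
      rw [Finset.sum_congr rfl (fun b hb => sq_zmod3 _ (Finset.mem_filter.mp hb).2),
        Finset.sum_const, nsmul_eq_mul, mul_one]
    rw [hz, ho, zero_add]
    congr 1
    have hcards := Finset.card_filter_add_card_filter_not
      (s := ballSet (m+1) e) (p := fun b => χ b = 0)
    rw [card_ballSet] at hcards
    clear_value t
    clear hmod0 hq hχ hcasta hχapp
    omega
  rw [hmod0] at hmod1
  have hdvd : (3:ℕ) ∣ 2 * t := by
    rwa [eq_comm, ZMod.natCast_eq_zero_iff] at hmod1
  clear_value t
  clear hmod1 hq hχ hcasta hχapp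
  omega
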